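/- Let β ∈ [1/2, 2/3] and let E be a set of items of a unit-density instance such that v(Opt(E_a)) < β·C for every agent a. Then, for every agent a and every item i ∈ E_a, the set R(E) a-dominates the set R(E∖{i}) (with R(∅) = ∅). -/

import Mathlib

open Finset

/-- The optimal value of the knapsack problem on a unit-density item set `E`. -/
noncomputable def optValUD {ι : Type*} (v : ι → ℝ) (C : ℝ) (E : Finset ι) : ℝ :=
  sSup ((fun D : Finset ι => ∑ i ∈ D, v i) '' {D : Finset ι | D ⊆ E ∧ ∑ i ∈ D, v i ≤ C})

/-- `P(E)`: items that fit together with every less valuable item of other agents. -/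
noncomputable def Pset {ι A : Type*} [DecidableEq ι] [DecidableEq A]
    (v : ι → ℝ) (owner : ι → A) (C : ℝ) (E : Finset ι) : Finset ι :=
  E.filter (fun i => ∀ j ∈ E, owner j ≠ owner i → v j < v i → v i + v j ≤ C)

/-- `i*(E)`: the most valuable item of `P(E)`. -/
noncomputable def istar {ι A : Type*} [DecidableEq ι] [DecidableEq A] [Nonempty ι]
    (v : ι → ℝ) (owner : ι → A) (C : ℝ) (E : Finset ι) : ι :=
  if h : (Pset v owner C E).Nonempty then
    ((Pset v owner C E).exists_max_image v h).choose
  else Classical.arbitrary ι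

/-- `R(E) = {i*(E)} ∪ {i ∈ E : v_{i*(E)} + v_i ≤ C}`, with `R(∅) = ∅`. -/
noncomputable def Rset {ι A : Type*} [DecidableEq ι] [DecidableEq A] [Nonempty ι]
    (v : ι → ℝ) (owner : ι → A) (C : ℝ) (E : Finset ι) : Finset ι :=
  if E.Nonempty then
    insert (istar v owner C E) (E.filter (fun i => v (istar v owner C E) + v i ≤ C))
  else ∅

/-- The `k`-th largest value (1-indexed) among the items of `F`. -/
noncomputable def kthLargest {ι : Type*} (v : ι → ℝ) (F : Finset ι) (k : ℕ) : ℝ :=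
  ((F.image v).sort (· ≤ ·)).reverse.getD (k - 1) 0

/-- `F` `a`-dominates `F'`. -/
def aDominates {ι A : Type*} [DecidableEq ι] [DecidableEq A]
    (v : ι → ℝ) (owner : ι → A) (a : A) (F F' : Finset ι) : Prop :=
  (F'.filter (fun i => owner i = a)).card ≤ (F.filter (fun i => owner i = a)).card ∧
  (F.filter (fun i => ¬ owner i = a)).card ≤ (F'.filter (fun i => ¬ owner i = a)).card ∧
  (∀ k : ℕ, 1 ≤ k → k ≤ (F'.filter (fun i => owner i = a)).card →
    kthLargest v (F'.filter (fun i => owner i = a)) k ≤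
      kthLargest v (F.filter (fun i => owner i = a)) k) ∧
  (∀ k : ℕ, 1 ≤ k → k ≤ (F.filter (fun i => ¬ owner i = a)).card →
    kthLargest v (F.filter (fun i => ¬ owner i = a)) k ≤
      kthLargest v (F'.filter (fun i => ¬ owner i = a)) k)

/-! ### Auxiliary lemmas on `kthLargest` -/

namespace KnapAux

lemma desc_antitone (X : Finset ℝ) {j k : ℕ} (hjk : j ≤ k) (hk : k < X.card) :
    (X.sort (· ≤ ·)).reverse.getD k 0 ≤ (X.sort (· ≤ ·)).reverse.getD j 0 := by
  set l := X.sort (· ≤ ·) with hl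
  have hlen : l.length = X.card := Finset.length_sort _
  have hkr : k < l.reverse.length := by simpa [hlen]
  have hjr : j < l.reverse.length := by simp at hkr ⊢; omega
  rw [List.getD_eq_getElem _ _ hkr, List.getD_eq_getElem _ _ hjr]
  rw [List.getElem_reverse, List.getElem_reverse]
  have hs : l.Pairwise (· ≤ ·) := Finset.pairwise_sort _ _
  have : l.length - 1 - k ≤ l.length - 1 - j := by omega
  exact hs.rel_get_of_le (a := ⟨l.length - 1 - k, by omega⟩) (b := ⟨l.length - 1 - j, by omega⟩) this

lemma desc_mem (X : Finset ℝ) {k : ℕ} (hk : k < X.card) :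
    (X.sort (· ≤ ·)).reverse.getD k 0 ∈ X := by
  set l := X.sort (· ≤ ·) with hl
  have hlen : l.length = X.card := Finset.length_sort _
  have hkr : k < l.reverse.length := by simpa [hlen]
  rw [List.getD_eq_getElem _ _ hkr]
  have := List.getElem_mem hkr
  rw [List.mem_reverse, Finset.mem_sort] at this
  exact this

lemma desc_card_ge (X : Finset ℝ) {k : ℕ} (hk : k < X.card) :
    k + 1 ≤ (X.filter (fun x => (X.sort (· ≤ ·)).reverse.getD k 0 ≤ x)).card := by
  set l := X.sort (· ≤ ·) with hl
  have hlen : l.length = X.card := Finset.length_sort _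
  have h := Finset.card_le_card_of_injOn (s := Finset.range (k+1))
      (t := X.filter (fun x => l.reverse.getD k 0 ≤ x))
      (fun j => l.reverse.getD j 0) ?_ ?_
  · simpa using h
  · intro j hj
    simp only [Finset.mem_coe, Finset.mem_range] at hj
    have hjk : j ≤ k := by omega
    have hjc : j < X.card := by omega
    exact Finset.mem_filter.2 ⟨desc_mem X hjc, desc_antitone X hjk hk⟩
  · intro j1 h1 j2 h2 heq
    simp only [Finset.coe_range, Set.mem_Iio] at h1 h2
    have hn : l.reverse.Nodup := List.nodup_reverse.2 (Finset.sort_nodup _ _)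
    have e1 : j1 < l.reverse.length := by simp [hlen]; omega
    have e2 : j2 < l.reverse.length := by simp [hlen]; omega
    simp only [List.getD_eq_getElem _ _ e1, List.getD_eq_getElem _ _ e2] at heq
    have := (hn.get_inj_iff (i := ⟨j1, e1⟩) (j := ⟨j2, e2⟩)).1 (by simpa using heq)
    simpa using congrArg Fin.val this

lemma desc_ge_of_card {X : Finset ℝ} {x : ℝ} {k : ℕ}
    (h : k + 1 ≤ (X.filter (fun y => x ≤ y)).card) :
    x ≤ (X.sort (· ≤ ·)).reverse.getD k 0 := by
  set l := X.sort (· ≤ ·) with hl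
  have hlen : l.length = X.card := Finset.length_sort _
  have hkX : k < X.card := lt_of_lt_of_le (Nat.lt_succ_self k)
    (le_trans h (Finset.card_le_card (Finset.filter_subset _ _)))
  by_contra hcon
  push_neg at hcon
  have hsub : X.filter (fun y => x ≤ y) ⊆ (l.reverse.take k).toFinset := by
    intro y hy
    rw [Finset.mem_filter] at hy
    have hyl : y ∈ l.reverse := by rw [List.mem_reverse, Finset.mem_sort]; exact hy.1
    obtain ⟨j, hj, hje⟩ := List.mem_iff_getElem.1 hyl
    have hjk : j < k := by
      by_contra hge
      push_neg at hge
      have hd : l.reverse.getD j 0 ≤ l.reverse.getD k 0 := by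
        apply desc_antitone X hge
        have : j < l.reverse.length := hj
        simp [hlen] at this; omega
      rw [List.getD_eq_getElem _ _ hj] at hd
      rw [hje] at hd
      exact absurd (le_trans hy.2 hd) (not_le.2 hcon)
    have hjt : j < (l.reverse.take k).length := by
      rw [List.length_take]
      have : j < l.reverse.length := hj
      omega
    rw [List.mem_toFinset]
    have : (l.reverse.take k)[j] = y := by rw [List.getElem_take]; exact hje
    rw [← this]
    exact List.getElem_mem hjt
  have hc := Finset.card_le_card hsub
  have := le_trans (List.toFinset_card_le (l.reverse.take k)) (by
    rw [List.length_take]; exact min_le_left _ _ : (l.reverse.take k).length ≤ k)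
  omega

lemma count_eq_image {ι : Type*} [DecidableEq ι] (v : ι → ℝ) (hv : Function.Injective v)
    (F : Finset ι) (t : ℝ) :
    (F.filter (fun i => t ≤ v i)).card = ((F.image v).filter (fun x => t ≤ x)).card := by
  rw [Finset.filter_image, Finset.card_image_of_injective _ hv]

lemma kthLargest_mono {ι : Type*} [DecidableEq ι] (v : ι → ℝ) (hv : Function.Injective v)
    (F F' : Finset ι)
    (h : ∀ t : ℝ, (F.filter (fun i => t ≤ v i)).card ≤ (F'.filter (fun i => t ≤ v i)).card)
    {k : ℕ} (hk1 : 1 ≤ k) (hk2 : k ≤ F.card) :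
    kthLargest v F k ≤ kthLargest v F' k := by
  unfold kthLargest
  set X := F.image v with hX
  set Y := F'.image v with hY
  have hcX : X.card = F.card := Finset.card_image_of_injective _ hv
  have hk : k - 1 < X.card := by omega
  set d := (X.sort (· ≤ ·)).reverse.getD (k-1) 0 with hd
  have h1 : (k-1) + 1 ≤ (X.filter (fun x => d ≤ x)).card := desc_card_ge X hk
  rw [← count_eq_image v hv F d] at h1
  have h2 := le_trans h1 (h d)
  rw [count_eq_image v hv F' d] at h2
  exact desc_ge_of_card h2

lemma counts_of_subset {ι : Type*} [DecidableEq ι] (v : ι → ℝ) {F G : Finset ι} (h : F ⊆ G) :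
    (∀ t : ℝ, (F.filter (fun i => t ≤ v i)).card ≤ (G.filter (fun i => t ≤ v i)).card)
      ∧ F.card ≤ G.card :=
  ⟨fun _ => Finset.card_le_card (Finset.filter_subset_filter _ h), Finset.card_le_card h⟩

lemma counts_of_cover {ι : Type*} [DecidableEq ι] (v : ι → ℝ) (F G : Finset ι) (y : ι)
    (hyG : y ∈ G) (hyF : y ∉ F)
    (hval : ∀ x ∈ F, x ∉ G → v x ≤ v y)
    (hcard : ∀ x1 ∈ F, ∀ x2 ∈ F, x1 ∉ G → x2 ∉ G → x1 = x2) :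
    (∀ t : ℝ, (F.filter (fun i => t ≤ v i)).card ≤ (G.filter (fun i => t ≤ v i)).card)
      ∧ F.card ≤ G.card := by
  classical
  set φ : ι → ι := fun x => if x ∈ G then x else y with hφ
  have hinj : Set.InjOn φ ↑F := by
    intro x1 h1 x2 h2 heq
    simp only [Finset.mem_coe] at h1 h2
    simp only [hφ] at heq
    by_cases g1 : x1 ∈ G <;> by_cases g2 : x2 ∈ G
    · simpa [g1, g2] using heq
    · rw [if_pos g1, if_neg g2] at heq; exact absurd (heq ▸ h1) hyF
    · rw [if_neg g1, if_pos g2] at heq; exact absurd (heq.symm ▸ h2) hyF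
    · exact hcard x1 h1 x2 h2 g1 g2
  constructor
  · intro t
    by_cases hty : t ≤ v y
    · apply Finset.card_le_card_of_injOn φ
      · intro x hx
        rw [Finset.mem_coe, Finset.mem_filter] at hx
        rw [Finset.mem_coe, Finset.mem_filter]
        by_cases g : x ∈ G
        · simp only [hφ, if_pos g]; exact ⟨g, hx.2⟩
        · simp only [hφ, if_neg g]; exact ⟨hyG, hty⟩
      · exact hinj.mono (by intro x hx; simpa using (Finset.mem_filter.1 hx).1)
    · apply Finset.card_le_card
      intro x hx
      rw [Finset.mem_filter] at hx ⊢
      refine ⟨?_, hx.2⟩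
      by_contra g
      exact hty (le_trans hx.2 (hval x hx.1 g))
  · apply Finset.card_le_card_of_injOn φ _ hinj
    intro x hx
    by_cases g : x ∈ G
    · simpa [hφ, g] using g
    · simpa [hφ, g] using hyG

lemma aDominates_of_counts {ι A : Type*} [DecidableEq ι] [DecidableEq A]
    (v : ι → ℝ) (hv : Function.Injective v) (owner : ι → A) (a : A) (F F' : Finset ι)
    (h1 : (∀ t : ℝ, ((F'.filter (fun i => owner i = a)).filter (fun i => t ≤ v i)).card ≤
        ((F.filter (fun i => owner i = a)).filter (fun i => t ≤ v i)).card) ∧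
        (F'.filter (fun i => owner i = a)).card ≤ (F.filter (fun i => owner i = a)).card)
    (h2 : (∀ t : ℝ, ((F.filter (fun i => ¬ owner i = a)).filter (fun i => t ≤ v i)).card ≤
        ((F'.filter (fun i => ¬ owner i = a)).filter (fun i => t ≤ v i)).card) ∧
        (F.filter (fun i => ¬ owner i = a)).card ≤ (F'.filter (fun i => ¬ owner i = a)).card) :
    aDominates v owner a F F' :=
  ⟨h1.2, h2.2, fun _ hk1 hk2 => kthLargest_mono v hv _ _ h1.1 hk1 hk2,
    fun _ hk1 hk2 => kthLargest_mono v hv _ _ h2.1 hk1 hk2⟩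

/-! ### Structural lemmas -/

section Struct
variable {ι A : Type*} [DecidableEq ι] [DecidableEq A] [Nonempty ι]

lemma Pset_subset (v : ι → ℝ) (owner : ι → A) (C : ℝ) (F : Finset ι) :
    Pset v owner C F ⊆ F := Finset.filter_subset _ _

lemma mem_Pset {v : ι → ℝ} {owner : ι → A} {C : ℝ} {F : Finset ι} {j : ι} :
    j ∈ Pset v owner C F ↔
      j ∈ F ∧ ∀ k ∈ F, owner k ≠ owner j → v k < v j → v j + v k ≤ C :=
  Finset.mem_filter

lemma Pset_nonempty {v : ι → ℝ} {owner : ι → A} {C : ℝ} {F : Finset ι} (hF : F.Nonempty) :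
    (Pset v owner C F).Nonempty := by
  obtain ⟨j, hj, hmin⟩ := F.exists_min_image v hF
  exact ⟨j, mem_Pset.2 ⟨hj, fun k hk _ hlt => absurd (hmin k hk) (not_le.2 hlt)⟩⟩

lemma istar_spec {v : ι → ℝ} {owner : ι → A} {C : ℝ} {F : Finset ι} (hF : F.Nonempty) :
    istar v owner C F ∈ Pset v owner C F ∧
      ∀ j ∈ Pset v owner C F, v j ≤ v (istar v owner C F) := by
  have h : (Pset v owner C F).Nonempty := Pset_nonempty hF
  unfold istar
  rw [dif_pos h]
  exact ((Pset v owner C F).exists_max_image v h).choose_spec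

lemma gap {v : ι → ℝ} {owner : ι → A} {C : ℝ} {F : Finset ι} (hF : F.Nonempty)
    {j : ι} (hj : j ∈ F) (h1 : v (istar v owner C F) < v j) :
    C - v (istar v owner C F) < v j := by
  by_contra hcon
  push_neg at hcon
  set m := istar v owner C F with hmdef
  set B := F.filter (fun x => v m < v x ∧ v x ≤ C - v m) with hB
  have hBne : B.Nonempty := ⟨j, Finset.mem_filter.2 ⟨hj, h1, hcon⟩⟩
  obtain ⟨j0, hj0, hmin⟩ := B.exists_min_image v hBne
  rw [hB, Finset.mem_filter] at hj0
  obtain ⟨hj0F, hj0l, hj0u⟩ := hj0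
  have hspec := istar_spec (v := v) (owner := owner) (C := C) hF
  have hj0P : j0 ∉ Pset v owner C F := fun h => absurd (hspec.2 j0 h) (not_le.2 hj0l)
  have hnB : ¬ ∀ k ∈ F, owner k ≠ owner j0 → v k < v j0 → v j0 + v k ≤ C :=
    fun h => hj0P (mem_Pset.2 ⟨hj0F, h⟩)
  push_neg at hnB
  obtain ⟨k, hkF, hko, hkv, hkC⟩ := hnB
  have hk1 : v m < v k := by linarith
  have hk2 : v k ≤ C - v m := by linarith
  have := hmin k (Finset.mem_filter.2 ⟨hkF, hk1, hk2⟩)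
  linarith

lemma Pset_mono_erase {v : ι → ℝ} {owner : ι → A} {C : ℝ} {F : Finset ι} {i j : ι}
    (hj : j ∈ Pset v owner C F) (hjF : j ∈ F.erase i) : j ∈ Pset v owner C (F.erase i) := by
  rw [mem_Pset] at hj ⊢
  exact ⟨hjF, fun k hk => hj.2 k (Finset.mem_of_mem_erase hk)⟩

lemma mem_Rset {v : ι → ℝ} {owner : ι → A} {C : ℝ} {F : Finset ι} (hF : F.Nonempty) {j : ι} :
    j ∈ Rset v owner C F ↔
      j = istar v owner C F ∨ (j ∈ F ∧ v (istar v owner C F) + v j ≤ C) := by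
  unfold Rset
  rw [if_pos hF]
  simp only [Finset.mem_insert, Finset.mem_filter]

lemma Rset_subset {v : ι → ℝ} {owner : ι → A} {C : ℝ} {F : Finset ι} :
    Rset v owner C F ⊆ F := by
  unfold Rset
  split
  next hF =>
    intro j hj
    rcases Finset.mem_insert.1 hj with rfl | hj
    · exact Pset_subset _ _ _ _ (istar_spec hF).1
    · exact Finset.mem_of_mem_filter _ hj
  next hF =>
    intro j hj
    simp at hj

lemma aDominates_erase (v : ι → ℝ) (hvinj : Function.Injective v) (owner : ι → A) (a : A)
    (F : Finset ι) (x : ι) (hxa : owner x = a) :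
    aDominates v owner a F (F.erase x) := by
  apply KnapAux.aDominates_of_counts v hvinj
  · exact KnapAux.counts_of_subset v
      (Finset.filter_subset_filter _ (Finset.erase_subset _ _))
  · have heq : (F.erase x).filter (fun z => ¬ owner z = a) = F.filter (fun z => ¬ owner z = a) := by
      ext y
      simp only [Finset.mem_filter, Finset.mem_erase]
      constructor
      · rintro ⟨⟨_, hy⟩, h⟩; exact ⟨hy, h⟩
      · rintro ⟨hy, h⟩; exact ⟨⟨fun he => h (he ▸ hxa), hy⟩, h⟩
    rw [heq]
    exact ⟨fun _ => le_refl _, le_refl _⟩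

end Struct

lemma optVal_ge {ι : Type*} (v : ι → ℝ) (C : ℝ) (F D : Finset ι) (hD : D ⊆ F)
    (hsum : ∑ x ∈ D, v x ≤ C) : ∑ x ∈ D, v x ≤ optValUD v C F := by
  apply le_csSup
  · refine ⟨C, ?_⟩
    rintro x ⟨D', hD', rfl⟩
    exact hD'.2
  · exact ⟨D, ⟨hD, hsum⟩, rfl⟩

end KnapAux

/-- if no agent's individual optimum reaches `β·C`, then for every agent `a`
and item `i ∈ E_a`, the restricted set `R(E)` `a`-dominates `R(E∖{i})`. -/
theorem stmt_11 {ι A : Type*} [DecidableEq ι] [DecidableEq A] [Nonempty ι]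
    (v : ι → ℝ) (owner : ι → A) (C : ℝ)
    (hC : 0 < C) (hv : ∀ i, 0 < v i) (hvC : ∀ i, v i ≤ C)
    (hvinj : Function.Injective v)
    (β : ℝ) (hβ₁ : 1 / 2 ≤ β) (hβ₂ : β ≤ 2 / 3)
    (E : Finset ι)
    (hopt : ∀ a : A, optValUD v C (E.filter (fun i => owner i = a)) < β * C) :
    ∀ a : A, ∀ i ∈ E.filter (fun j => owner j = a),
      aDominates v owner a (Rset v owner C E) (Rset v owner C (E.erase i)) := by
  intro a i hi
  rw [Finset.mem_filter] at hi
  obtain ⟨hiE, hia⟩ := hi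
  by_cases hE' : (E.erase i).Nonempty
  swap
  · -- `E = {i}` : `R(E∖{i}) = ∅`
    have hR' : Rset v owner C (E.erase i) = ∅ := by unfold Rset; rw [if_neg hE']
    rw [hR']
    have hRE : ∀ x ∈ Rset v owner C E, owner x = a := by
      intro x hx
      have hxE : x ∈ E := KnapAux.Rset_subset hx
      have hxi : x = i := by
        by_contra hne
        exact hE' ⟨x, Finset.mem_erase.2 ⟨hne, hxE⟩⟩
      rw [hxi]; exact hia
    have hempty : (Rset v owner C E).filter (fun x => ¬ owner x = a) = ∅ := by
      rw [Finset.filter_eq_empty_iff]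
      intro x hx
      simp [hRE x hx]
    refine ⟨by simp, by simp [hempty], ?_, ?_⟩
    · intro k hk1 hk2
      simp at hk2
      omega
    · intro k hk1 hk2
      rw [hempty] at hk2
      simp at hk2
      omega
  · -- main case
    have hE : E.Nonempty := ⟨i, hiE⟩
    set E' := E.erase i with hE'def
    set m := istar v owner C E with hmdef
    set m' := istar v owner C E' with hm'def
    have hmspec := KnapAux.istar_spec (v := v) (owner := owner) (C := C) hE
    have hm'spec := KnapAux.istar_spec (v := v) (owner := owner) (C := C) hE'
    obtain ⟨hmP, hmmax⟩ := hmspec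
    obtain ⟨hm'P, hm'max⟩ := hm'spec
    have hmE : m ∈ E := KnapAux.Pset_subset _ _ _ _ hmP
    have hm'E' : m' ∈ E' := KnapAux.Pset_subset _ _ _ _ hm'P
    have hm'E : m' ∈ E := Finset.mem_of_mem_erase hm'E'
    have hm'i : m' ≠ i := (Finset.mem_erase.1 hm'E').1
    -- every item is worth less than `β·C`
    have hsmall : ∀ j ∈ E, v j < β * C := by
      intro j hj
      have h1 : ∑ x ∈ ({j} : Finset ι), v x ≤
          optValUD v C (E.filter (fun x => owner x = owner j)) := by
        apply KnapAux.optVal_ge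
        · intro x hx
          rw [Finset.mem_singleton] at hx
          subst hx
          exact Finset.mem_filter.2 ⟨hj, rfl⟩
        · simpa using hvC j
      simp only [Finset.sum_singleton] at h1
      exact lt_of_le_of_lt h1 (hopt (owner j))
    -- no same-owner feasible pair of two heavy items
    have hpairF : ∀ j ∈ E, ∀ k ∈ E, j ≠ k → owner j = owner k →
        C - β * C < v j → C - β * C < v k → v j + v k ≤ C → False := by
      intro j hj k hk hjk hok hbj hbk hsum
      have h1 : ∑ x ∈ ({j, k} : Finset ι), v x ≤
          optValUD v C (E.filter (fun x => owner x = owner j)) := by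
        apply KnapAux.optVal_ge
        · intro x hx
          rw [Finset.mem_insert, Finset.mem_singleton] at hx
          rcases hx with rfl | rfl
          · exact Finset.mem_filter.2 ⟨hj, rfl⟩
          · exact Finset.mem_filter.2 ⟨hk, hok.symm⟩
        · rw [Finset.sum_pair hjk]; exact hsum
      rw [Finset.sum_pair hjk] at h1
      have h2 := hopt (owner j)
      nlinarith
    have hmemR : ∀ j : ι, j ∈ Rset v owner C E ↔ j = m ∨ (j ∈ E ∧ v m + v j ≤ C) :=
      fun j => KnapAux.mem_Rset hE
    have hmemR' : ∀ j : ι, j ∈ Rset v owner C E' ↔ j = m' ∨ (j ∈ E' ∧ v m' + v j ≤ C) :=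
      fun j => KnapAux.mem_Rset hE'
    rcases lt_trichotomy (v m') (v m) with hlt | heq | hgt
    · -- v m' < v m : necessarily i = m
      have him : i = m := by
        by_contra hne
        have hmE' : m ∈ E' := Finset.mem_erase.2 ⟨fun h => hne h.symm, hmE⟩
        have := hm'max m (KnapAux.Pset_mono_erase hmP hmE')
        linarith
      have hma : owner m = a := him ▸ hia
      have hmnE' : m ∉ E' := him ▸ Finset.notMem_erase i E
      rcases le_or_gt (v m) (C / 2) with hhalf | hhalf
      · -- small `m`: `R(E') = R(E) ∖ {m}`
        have hReq : Rset v owner C E' = (Rset v owner C E).erase m := by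
          ext x
          rw [Finset.mem_erase, hmemR' x, hmemR x]
          constructor
          · rintro (rfl | ⟨hxE', hc⟩)
            · exact ⟨fun h => absurd (congrArg v h) (ne_of_lt hlt),
                Or.inr ⟨hm'E, by linarith⟩⟩
            · have hxle : v x ≤ v m' := by
                by_contra hgt2
                push_neg at hgt2
                have := KnapAux.gap hE' hxE' hgt2
                linarith
              have hxm : x ≠ m := fun h => hmnE' (h ▸ hxE')
              exact ⟨hxm, Or.inr ⟨Finset.mem_of_mem_erase hxE', by linarith⟩⟩
          · rintro ⟨hxm, rfl | ⟨hxE, hc⟩⟩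
            · exact absurd rfl hxm
            · have hxE' : x ∈ E' := Finset.mem_erase.2 ⟨him ▸ hxm, hxE⟩
              have hxv : v x < v m := by
                rcases lt_or_gt_of_ne (fun h : v x = v m => hxm (hvinj h)) with h | h
                · exact h
                · exfalso
                  have := KnapAux.gap hE hxE h
                  linarith
              by_cases hxm' : x = m'
              · exact Or.inl hxm'
              · exact Or.inr ⟨hxE', by linarith⟩
        rw [hReq]
        exact KnapAux.aDominates_erase v hvinj owner a _ m hma
      · -- big `m` (C/2 < v m)
        have hmnotR' : m ∉ Rset v owner C E' := by
          rw [hmemR']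
          rintro (h | ⟨h, _⟩)
          · exact absurd (congrArg v h) (ne_of_gt hlt)
          · exact hmnE' h
        -- extras on the a-side
        have hextra : ∀ x, x ∈ Rset v owner C E' → x ∉ Rset v owner C E →
            (C - v m < v x ∧ v x < v m ∧ x ∈ E ∧
              (x ≠ m' → v x ≤ C - v m' ∧ v x < v m')) := by
          intro x hxR' hxnR
          have hxE' : x ∈ E' := KnapAux.Rset_subset hxR'
          have hxE : x ∈ E := Finset.mem_of_mem_erase hxE'
          have hxm : x ≠ m := fun h => hmnE' (h ▸ hxE')
          have hxc : ¬ (v m + v x ≤ C) := fun h => hxnR ((hmemR x).2 (Or.inr ⟨hxE, h⟩))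
          push_neg at hxc
          have hkey : x ≠ m' → v x ≤ C - v m' ∧ v x < v m' := by
            intro hxm'
            have h2 : v m' + v x ≤ C := by
              rcases (hmemR' x).1 hxR' with h2 | ⟨_, h2⟩
              · exact absurd h2 hxm'
              · exact h2
            refine ⟨by linarith, ?_⟩
            rcases lt_or_gt_of_ne (fun h : v x = v m' => hxm' (hvinj h)) with h | h
            · exact h
            · exfalso
              have := KnapAux.gap hE' hxE' h
              linarith
          have hxlt : v x < v m := by
            by_cases hxm' : x = m'
            · subst hxm'; exact hlt
            · exact lt_trans (hkey hxm').2 hlt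
          exact ⟨by linarith, hxlt, hxE, hkey⟩
        apply KnapAux.aDominates_of_counts v hvinj
        · -- a-side: cover with y = m
          apply KnapAux.counts_of_cover v _ _ m
          · exact Finset.mem_filter.2 ⟨(hmemR m).2 (Or.inl rfl), hma⟩
          · exact fun h => hmnotR' (Finset.mem_filter.1 h).1
          · intro x hx hnx
            rw [Finset.mem_filter] at hx
            have hxnR : x ∉ Rset v owner C E := fun h => hnx (Finset.mem_filter.2 ⟨h, hx.2⟩)
            exact le_of_lt (hextra x hx.1 hxnR).2.1
          · intro x1 h1 x2 h2 hn1 hn2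
            by_contra hne
            rw [Finset.mem_filter] at h1 h2
            have hxn1 : x1 ∉ Rset v owner C E := fun h => hn1 (Finset.mem_filter.2 ⟨h, h1.2⟩)
            have hxn2 : x2 ∉ Rset v owner C E := fun h => hn2 (Finset.mem_filter.2 ⟨h, h2.2⟩)
            obtain ⟨hl1, hu1, hE1, hk1⟩ := hextra x1 h1.1 hxn1
            obtain ⟨hl2, hu2, hE2, hk2⟩ := hextra x2 h2.1 hxn2
            have hsum : v x1 + v x2 ≤ C := by
              by_cases e1 : x1 = m'
              · subst e1
                have t2 := hk2 (fun h => hne h.symm)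
                linarith [t2.1]
              · by_cases e2 : x2 = m'
                · subst e2
                  have t1 := hk1 (fun h => hne h)
                  linarith [t1.1]
                · have t1 := hk1 e1
                  have t2 := hk2 e2
                  linarith [t1.1, t2.2]
            have hbm : v m < β * C := hsmall m hmE
            exact hpairF x1 hE1 x2 hE2 hne (h1.2.trans h2.2.symm) (by linarith)
              (by linarith) hsum
        · -- o-side: subset
          apply KnapAux.counts_of_subset v
          intro x hx
          rw [Finset.mem_filter] at hx ⊢
          obtain ⟨hxR, hxa⟩ := hx
          refine ⟨?_, hxa⟩
          rcases (hmemR x).1 hxR with rfl | ⟨hxE, hc⟩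
          · exact absurd hma hxa
          · have hxi : x ≠ i := fun h => hxa (h ▸ hia)
            exact (hmemR' x).2 (Or.inr ⟨Finset.mem_erase.2 ⟨hxi, hxE⟩, by linarith⟩)
    · -- v m' = v m : `R(E') = R(E) ∖ {i}`
      have hmm : m' = m := hvinj heq
      have him : m ≠ i := hmm ▸ hm'i
      have hReq : Rset v owner C E' = (Rset v owner C E).erase i := by
        ext x
        rw [Finset.mem_erase, hmemR' x, hmemR x, hmm]
        constructor
        · rintro (rfl | ⟨hx, hxc⟩)
          · exact ⟨him, Or.inl rfl⟩
          · exact ⟨(Finset.mem_erase.1 hx).1, Or.inr ⟨Finset.mem_of_mem_erase hx, hxc⟩⟩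
        · rintro ⟨hxi, rfl | ⟨hx, hxc⟩⟩
          · exact Or.inl rfl
          · exact Or.inr ⟨Finset.mem_erase.2 ⟨hxi, hx⟩, hxc⟩
      rw [hReq]
      exact KnapAux.aDominates_erase v hvinj owner a _ i hia
    · -- v m < v m'
      have hm'nP : m' ∉ Pset v owner C E := fun h => absurd (hmmax m' h) (not_le.2 hgt)
      have hnB : ¬ ∀ k ∈ E, owner k ≠ owner m' → v k < v m' → v m' + v k ≤ C :=
        fun h => hm'nP (KnapAux.mem_Pset.2 ⟨hm'E, h⟩)
      push_neg at hnB
      obtain ⟨k, hkE, hko, hkv, hkC⟩ := hnB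
      have hki : k = i := by
        by_contra hne
        have hkE' : k ∈ E' := Finset.mem_erase.2 ⟨hne, hkE⟩
        have := (KnapAux.mem_Pset.1 hm'P).2 k hkE' hko hkv
        linarith
      rw [hki] at hko hkv hkC
      have hb : ¬ owner m' = a := fun h => hko (by rw [hia, h])
      have hm'notR : m' ∉ Rset v owner C E := by
        rw [hmemR]
        rintro (h | ⟨_, hc⟩)
        · exact absurd (congrArg v h) (ne_of_gt hgt)
        · have := KnapAux.gap hE hm'E hgt
          linarith
      have hextra : ∀ x, x ∈ Rset v owner C E → ¬ owner x = a → x ∉ Rset v owner C E' →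
          (owner x = owner m' ∧ C - v m' < v x ∧ v x < v m' ∧ x ∈ E ∧
            (x ≠ m → v m + v x ≤ C) ∧ (x ≠ m → v x ≤ v m)) := by
        intro x hxR hxa hxnR'
        have hxE : x ∈ E := KnapAux.Rset_subset hxR
        have hxi : x ≠ i := fun h => hxa (h ▸ hia)
        have hxE' : x ∈ E' := Finset.mem_erase.2 ⟨hxi, hxE⟩
        have hxm' : x ≠ m' := fun h => hxnR' (h ▸ ((hmemR' m').2 (Or.inl rfl)))
        have hxc : ¬ (v m' + v x ≤ C) := fun h => hxnR' ((hmemR' x).2 (Or.inr ⟨hxE', h⟩))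
        push_neg at hxc
        have hsum : x ≠ m → v m + v x ≤ C := by
          intro hxm
          rcases (hmemR x).1 hxR with h | ⟨_, h⟩
          · exact absurd h hxm
          · exact h
        have hxle : x ≠ m → v x ≤ v m := by
          intro hxm
          by_contra hgt2
          push_neg at hgt2
          have hg := KnapAux.gap hE hxE hgt2
          have := hsum hxm
          linarith
        have hxlt : v x < v m' := by
          by_cases hxm : x = m
          · rw [hxm]; exact hgt
          · exact lt_of_le_of_lt (hxle hxm) hgt
        have hxo : owner x = owner m' := by
          by_contra hne2
          have := (KnapAux.mem_Pset.1 hm'P).2 x hxE' hne2 hxlt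
          linarith
        exact ⟨hxo, by linarith, hxlt, hxE, hsum, hxle⟩
      apply KnapAux.aDominates_of_counts v hvinj
      · -- a-side: subset
        apply KnapAux.counts_of_subset v
        intro x hx
        rw [Finset.mem_filter] at hx ⊢
        obtain ⟨hxR', hxa⟩ := hx
        refine ⟨?_, hxa⟩
        rcases (hmemR' x).1 hxR' with rfl | ⟨hxE', hc⟩
        · exact absurd hxa hb
        · exact (hmemR x).2 (Or.inr ⟨Finset.mem_of_mem_erase hxE', by linarith⟩)
      · -- o-side: cover with y = m'
        apply KnapAux.counts_of_cover v _ _ m'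
        · exact Finset.mem_filter.2 ⟨(hmemR' m').2 (Or.inl rfl), hb⟩
        · exact fun h => hm'notR (Finset.mem_filter.1 h).1
        · intro x hx hnx
          rw [Finset.mem_filter] at hx
          have hxnR' : x ∉ Rset v owner C E' := fun h => hnx (Finset.mem_filter.2 ⟨h, hx.2⟩)
          exact le_of_lt (hextra x hx.1 hx.2 hxnR').2.2.1
        · intro x1 h1 x2 h2 hn1 hn2
          by_contra hne
          rw [Finset.mem_filter] at h1 h2
          have hxn1 : x1 ∉ Rset v owner C E' := fun h => hn1 (Finset.mem_filter.2 ⟨h, h1.2⟩)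
          have hxn2 : x2 ∉ Rset v owner C E' := fun h => hn2 (Finset.mem_filter.2 ⟨h, h2.2⟩)
          obtain ⟨ho1, hl1, hu1, hE1, hs1, hle1⟩ := hextra x1 h1.1 h1.2 hxn1
          obtain ⟨ho2, hl2, hu2, hE2, hs2, hle2⟩ := hextra x2 h2.1 h2.2 hxn2
          have hsum : v x1 + v x2 ≤ C := by
            by_cases e1 : x1 = m
            · subst e1
              have := hs2 (fun h => hne h.symm)
              linarith
            · by_cases e2 : x2 = m
              · subst e2
                have := hs1 hne
                linarith
              · have t2 := hs2 e2
                have t1 := hle1 e1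
                linarith
          have hbm' : v m' < β * C := hsmall m' hm'E
          exact hpairF x1 hE1 x2 hE2 hne (ho1.trans ho2.symm) (by linarith)
            (by linarith) hsum
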